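/- arXiv:2504.16716 — 2 statements merged into one kernel-verified Lean document; each statement's English description precedes it below -/
import Mathlib

section
/- Let p be an odd prime, let d be a positive integer dividing p−1, and let a ∈ {1, …, d−1}. Then Γ_p(a/d) · ((p−1)a/d)! ≡ 1 (mod p) in ℤ_p, where (p−1)a/d is a (non-negative) integer. -/
open Filter

/-- Morita's `p`-adic gamma function on natural numbers. -/
noncomputable def padicGammaNat (p : ℕ) [Fact p.Prime] (n : ℕ) : ℤ_[p] :=
  (-1) ^ n * ∏ j ∈ (Finset.Ioo 0 n).filter (fun j => ¬ p ∣ j), (j : ℤ_[p])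

/-- Morita's `p`-adic gamma function, extended to `ℤ_p` by continuity. -/
noncomputable def padicGamma (p : ℕ) [Fact p.Prime] (x : ℤ_[p]) : ℤ_[p] :=
  limUnder ((nhds x).comap (fun n : ℕ => (n : ℤ_[p]))) (padicGammaNat p)

lemma sq_eq_one_zmod {p k : ℕ} (hp : p.Prime) (hodd : Odd p) (hk : 1 ≤ k)
    {x : ZMod (p ^ k)} (hx : x * x = 1) : x = 1 ∨ x = -1 := by
  have hp3 : 3 ≤ p := by
    rcases hodd with ⟨t, ht⟩
    have := hp.two_le
    omega
  have hq : 1 < p ^ k := Nat.one_lt_pow (by omega) hp.one_lt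
  haveI : NeZero (p ^ k) := ⟨by omega⟩
  set v : ℤ := (x.val : ℤ) with hv
  have hxv : x = (v : ZMod (p ^ k)) := by
    simp [hv, ZMod.natCast_val, ZMod.intCast_cast, ZMod.intCast_zmod_cast]
  have hdvd : ((p : ℤ) ^ k) ∣ (v - 1) * (v + 1) := by
    have h0 : (((v - 1) * (v + 1) : ℤ) : ZMod (p ^ k)) = 0 := by
      push_cast
      rw [← hxv]
      rw [← sub_eq_zero] at hx
      linear_combination hx
    rwa [ZMod.intCast_zmod_eq_zero_iff_dvd, Nat.cast_pow] at h0
  have hpZ : Prime (p : ℤ) := Int.prime_iff_natAbs_prime.mpr (by simpa using hp)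
  have hp2 : ¬ ((p : ℤ) ∣ 2) := by
    intro h
    have h' : (p : ℤ) ∣ ((2 : ℕ) : ℤ) := by exact_mod_cast h
    have := Nat.le_of_dvd (by norm_num) (Int.natCast_dvd_natCast.mp h')
    omega
  have hdvd1 : (p : ℤ) ∣ (v - 1) * (v + 1) := dvd_trans (dvd_pow_self _ (by omega)) hdvd
  have key : ∀ w : ℤ, ((p:ℤ)^k ∣ w) → ((w : ZMod (p ^ k)) = 0) := by
    intro w hw
    rw [ZMod.intCast_zmod_eq_zero_iff_dvd]
    exact_mod_cast hw
  rcases hpZ.dvd_mul.mp hdvd1 with h | h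
  · left
    have hnot : ¬ (p : ℤ) ∣ (v + 1) := fun h' => hp2 (by
      have := dvd_sub h' h; simpa using this)
    have h2 := hpZ.pow_dvd_of_dvd_mul_right k hnot hdvd
    have := key _ h2
    push_cast at this
    rw [sub_eq_zero] at this
    rw [hxv, this]
  · right
    have hnot : ¬ (p : ℤ) ∣ (v - 1) := fun h' => hp2 (by
      have := dvd_sub h h'; simpa using this)
    have h2 := hpZ.pow_dvd_of_dvd_mul_left k hnot hdvd
    have := key _ h2
    push_cast at this
    rw [add_eq_zero_iff_eq_neg] at this
    rw [hxv, this]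

lemma prod_units_zmod {p k : ℕ} [NeZero (p ^ k)] (hp : p.Prime) (hodd : Odd p) (hk : 1 ≤ k) :
    ∏ u : (ZMod (p ^ k))ˣ, (u : ZMod (p ^ k)) = -1 := by
  have hp3 : 3 ≤ p := by
    rcases hodd with ⟨t, ht⟩; have := hp.two_le; omega
  have hpk : p ≤ p ^ k := Nat.le_self_pow (by omega) p
  have hq : 2 < p ^ k := by omega
  have hne : (1 : (ZMod (p ^ k))ˣ) ≠ -1 := by
    intro h
    have : (1 : ZMod (p ^ k)) = -1 := by
      have := congrArg (Units.val) h
      simpa using this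
    have h2 : ((2 : ℕ) : ZMod (p ^ k)) = 0 := by
      push_cast
      linear_combination this
    rw [ZMod.natCast_eq_zero_iff] at h2
    have := Nat.le_of_dvd (by norm_num) h2
    omega
  classical
  have hsub : ({1, -1} : Finset (ZMod (p ^ k))ˣ) ⊆ Finset.univ := Finset.subset_univ _
  have hsq : ∀ a : (ZMod (p ^ k))ˣ, a⁻¹ = a → a = 1 ∨ a = -1 := by
    intro a ha
    have : (a : ZMod (p ^ k)) * a = 1 := by
      have := congrArg (Units.val) (mul_inv_cancel a)
      rw [ha] at this
      simpa [mul_comm] using this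
    rcases sq_eq_one_zmod hp hodd hk this with h | h
    · left; ext; simpa using h
    · right; ext; simpa using h
  have hrest : ∏ u ∈ (Finset.univ \ {1, -1} : Finset (ZMod (p ^ k))ˣ), u = 1 := by
    refine Finset.prod_involution (fun a _ => a⁻¹) (fun a _ => mul_inv_cancel a)
      (fun a ha _ => ?_) (fun a ha => ?_) (fun a ha => inv_inv a)
    · intro hinv
      rcases hsq a hinv with h | h <;> simp [h] at ha
    · simp only [Finset.mem_sdiff, Finset.mem_insert, Finset.mem_singleton] at ha ⊢
      refine ⟨Finset.mem_univ _, ?_⟩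
      rintro (h | h)
      · rcases ha with ⟨-, ha⟩
        exact ha (Or.inl (by simpa using congrArg (·⁻¹) h))
      · rcases ha with ⟨-, ha⟩
        refine ha (Or.inr ?_)
        have := congrArg (·⁻¹) h
        simpa using this
  have hunits : ∏ u : (ZMod (p ^ k))ˣ, u = (-1 : (ZMod (p ^ k))ˣ) := by
    rw [← Finset.prod_sdiff hsub, hrest, one_mul,
      Finset.prod_pair hne]
    simp
  calc ∏ u : (ZMod (p ^ k))ˣ, (u : ZMod (p ^ k))
      = ((∏ u : (ZMod (p ^ k))ˣ, u : (ZMod (p ^ k))ˣ) : ZMod (p ^ k)) :=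
        (map_prod (Units.coeHom (ZMod (p ^ k))) (fun u => u) Finset.univ).symm
    _ = -1 := by rw [hunits]; simp

lemma prod_range_coprime_zmod {p k : ℕ} (hp : p.Prime) (hodd : Odd p) (hk : 1 ≤ k) :
    ∏ j ∈ (Finset.range (p ^ k)).filter (fun j => ¬ p ∣ j), (j : ZMod (p ^ k)) = -1 := by
  have hq1 : 1 < p ^ k := Nat.one_lt_pow (by omega) hp.one_lt
  haveI : NeZero (p ^ k) := ⟨by omega⟩
  rw [← prod_units_zmod hp hodd hk]
  refine Finset.prod_bij (fun j hj => ZMod.unitOfCoprime j ?_) ?_ ?_ ?_ ?_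
  · simp only [Finset.mem_filter, Finset.mem_range] at hj
    exact ((Nat.Prime.coprime_iff_not_dvd hp).mpr hj.2).symm.pow_right k
  · intro a ha; exact Finset.mem_univ _
  · intro a₁ ha₁ a₂ ha₂ h
    simp only [Finset.mem_filter, Finset.mem_range] at ha₁ ha₂
    have h2 := congrArg (fun u : (ZMod (p ^ k))ˣ => (u : ZMod (p ^ k)).val) h
    simp only [ZMod.coe_unitOfCoprime, ZMod.val_natCast] at h2
    rcases ha₁ with ⟨hlt₁, -⟩; rcases ha₂ with ⟨hlt₂, -⟩
    rwa [Nat.mod_eq_of_lt hlt₁, Nat.mod_eq_of_lt hlt₂] at h2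
  · intro u hu
    refine ⟨(u : ZMod (p ^ k)).val, ?_, ?_⟩
    · simp only [Finset.mem_filter, Finset.mem_range]
      refine ⟨ZMod.val_lt _, fun hdvd => ?_⟩
      have hcop := ZMod.val_coe_unit_coprime u
      have hpq : p ∣ p ^ k := dvd_pow_self p (by omega)
      have : p ∣ Nat.gcd ((u : ZMod (p ^ k)).val) (p ^ k) := Nat.dvd_gcd hdvd hpq
      rw [Nat.Coprime] at hcop
      rw [hcop] at this
      have := Nat.le_of_dvd (by norm_num) this
      have := hp.two_le
      omega
    · ext
      simp [ZMod.coe_unitOfCoprime, ZMod.natCast_zmod_val]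
  · intro a ha
    simp [ZMod.coe_unitOfCoprime]

lemma prod_Ico_coprime_zmod {p k : ℕ} (hp : p.Prime) (hodd : Odd p) (hk : 1 ≤ k) (n : ℕ) :
    ∏ j ∈ (Finset.Ico n (n + p ^ k)).filter (fun j => ¬ p ∣ j), (j : ZMod (p ^ k)) = -1 := by
  have hq1 : 1 < p ^ k := Nat.one_lt_pow (by omega) hp.one_lt
  have hpq : p ∣ p ^ k := dvd_pow_self p (by omega)
  induction n with
  | zero =>
    rw [Nat.zero_add, ← Finset.range_eq_Ico]
    exact prod_range_coprime_zmod hp hodd hk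
  | succ n ih =>
    rw [← ih]
    classical
    have h1 : ∀ m l : ℕ, ∏ j ∈ (Finset.Ico m l).filter (fun j => ¬ p ∣ j), (j : ZMod (p ^ k))
        = ∏ j ∈ Finset.Ico m l, (if ¬ p ∣ j then (j : ZMod (p ^ k)) else 1) := by
      intro m l
      rw [Finset.prod_filter]
    rw [h1, h1]
    have e1 : n + 1 + p ^ k = (n + p ^ k) + 1 := by omega
    rw [e1, Finset.prod_Ico_succ_top (by omega),
      Finset.prod_eq_prod_Ico_succ_bot (by omega : n < n + p ^ k)]
    have hcast : ((n + p ^ k : ℕ) : ZMod (p ^ k)) = (n : ZMod (p ^ k)) := by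
      rw [Nat.cast_add, ZMod.natCast_self, add_zero]
    have hdvd : (p ∣ n + p ^ k) ↔ (p ∣ n) := (Nat.dvd_add_iff_left hpq).symm
    rw [mul_comm]
    congr 1
    by_cases hn : p ∣ n
    · simp [hn, hdvd.mpr hn]
    · simp [hn, hdvd, Nat.cast_add, ZMod.natCast_self]

lemma padicGammaNat_eq_range (p : ℕ) [Fact p.Prime] (n : ℕ) :
    padicGammaNat p n = (-1) ^ n * ∏ j ∈ (Finset.range n).filter (fun j => ¬ p ∣ j), (j : ℤ_[p]) := by
  unfold padicGammaNat
  congr 1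
  apply Finset.prod_congr _ (fun _ _ => rfl)
  ext j
  simp only [Finset.mem_filter, Finset.mem_Ioo, Finset.mem_range]
  constructor
  · rintro ⟨⟨h0, h1⟩, h2⟩; exact ⟨h1, h2⟩
  · rintro ⟨h1, h2⟩
    refine ⟨⟨?_, h1⟩, h2⟩
    rcases Nat.eq_zero_or_pos j with rfl | h
    · exact absurd (dvd_zero p) h2
    · exact h

lemma padicGammaNat_add (p : ℕ) [Fact p.Prime] (n q : ℕ) :
    padicGammaNat p (n + q) = padicGammaNat p n *
      ((-1) ^ q * ∏ j ∈ (Finset.Ico n (n + q)).filter (fun j => ¬ p ∣ j), (j : ℤ_[p])) := by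
  rw [padicGammaNat_eq_range, padicGammaNat_eq_range, Finset.prod_filter, Finset.prod_filter,
    Finset.prod_filter]
  simp only [Finset.range_eq_Ico]
  rw [← Finset.prod_Ico_consecutive _ (Nat.zero_le n) (Nat.le_add_right n q), pow_add]
  ring

lemma padicGammaNat_step (p k n : ℕ) [Fact p.Prime] (hodd : Odd p) (hk : 1 ≤ k) :
    (p : ℤ_[p]) ^ k ∣ padicGammaNat p (n + p ^ k) - padicGammaNat p n := by
  have hp := Fact.out (p := p.Prime)
  have hq1 : 1 < p ^ k := Nat.one_lt_pow (by omega) hp.one_lt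
  set q := p ^ k with hqdef
  set N : ℕ := ∏ j ∈ (Finset.Ico n (n + q)).filter (fun j => ¬ p ∣ j), j with hN
  have hcast : ∏ j ∈ (Finset.Ico n (n + q)).filter (fun j => ¬ p ∣ j), (j : ℤ_[p])
      = (N : ℤ_[p]) := by rw [hN, Nat.cast_prod]
  have hmod : ((N : ℕ) : ZMod q) = -1 := by
    rw [hN, Nat.cast_prod]
    exact prod_Ico_coprime_zmod hp hodd hk n
  have hdvd : q ∣ N + 1 := by
    have h0 : ((N + 1 : ℕ) : ZMod q) = 0 := by push_cast; rw [hmod]; ring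
    rwa [ZMod.natCast_eq_zero_iff] at h0
  have hq_odd : Odd q := hodd.pow
  rw [padicGammaNat_add, hcast, Odd.neg_one_pow hq_odd]
  have heq : padicGammaNat p n * (-1 * (N : ℤ_[p])) - padicGammaNat p n
      = -(padicGammaNat p n) * ((N : ℤ_[p]) + 1) := by ring
  rw [heq]
  have hdvd2 : (p : ℤ_[p]) ^ k ∣ ((N : ℤ_[p]) + 1) := by
    rcases hdvd with ⟨c, hc⟩
    refine ⟨(c : ℤ_[p]), ?_⟩
    have : ((N + 1 : ℕ) : ℤ_[p]) = ((q * c : ℕ) : ℤ_[p]) := by rw [hc]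
    push_cast at this
    rw [this, hqdef]
    push_cast
    ring
  exact hdvd2.mul_left _

lemma padicGammaNat_modEq (p k : ℕ) [Fact p.Prime] (hodd : Odd p) (hk : 1 ≤ k)
    {m n : ℕ} (h : m ≡ n [MOD p ^ k]) :
    (p : ℤ_[p]) ^ k ∣ padicGammaNat p m - padicGammaNat p n := by
  have aux : ∀ t m : ℕ, (p : ℤ_[p]) ^ k ∣ padicGammaNat p (m + p ^ k * t) - padicGammaNat p m := by
    intro t
    induction t with
    | zero => simp
    | succ t ih =>
      intro m
      have : m + p ^ k * (t + 1) = (m + p ^ k * t) + p ^ k := by ring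
      rw [this]
      have h1 := padicGammaNat_step p k (m + p ^ k * t) hodd hk
      have h2 := ih m
      have h3 := dvd_add h1 h2
      rwa [sub_add_sub_cancel] at h3
  rcases le_total m n with hle | hle
  · have hd : p ^ k ∣ n - m := (Nat.modEq_iff_dvd' hle).mp h
    rcases hd with ⟨t, ht⟩
    have hn : n = m + p ^ k * t := by omega
    rw [hn]
    exact dvd_sub_comm.mp (aux t m)
  · have hd : p ^ k ∣ m - n := (Nat.modEq_iff_dvd' hle).mp h.symm
    rcases hd with ⟨t, ht⟩
    have hm : m = n + p ^ k * t := by omega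
    rw [hm]
    exact aux t n

lemma natCast_close_modEq (p : ℕ) [Fact p.Prime] {m n k : ℕ}
    (h : ‖(m : ℤ_[p]) - (n : ℤ_[p])‖ ≤ (p : ℝ) ^ (-(k : ℤ))) : m ≡ n [MOD p ^ k] := by
  have h' : ‖(((m : ℤ) - (n : ℤ) : ℤ) : ℤ_[p])‖ ≤ (p : ℝ) ^ (-(k : ℤ)) := by
    push_cast
    exact h
  rw [PadicInt.norm_int_le_pow_iff_dvd] at h'
  have : ((p ^ k : ℕ) : ℤ) ∣ (n : ℤ) - (m : ℤ) := by
    push_cast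
    push_cast at h'
    have := h'.neg_right
    simpa [neg_sub] using this
  exact (Nat.modEq_iff_dvd).mpr this

lemma padicGammaNat_norm_le (p k : ℕ) [Fact p.Prime] (hodd : Odd p) (hk : 1 ≤ k)
    {m n : ℕ} (h : m ≡ n [MOD p ^ k]) :
    ‖padicGammaNat p m - padicGammaNat p n‖ ≤ (p : ℝ) ^ (-(k : ℤ)) := by
  rw [PadicInt.norm_le_pow_iff_mem_span_pow, Ideal.mem_span_singleton]
  exact padicGammaNat_modEq p k hodd hk h

lemma comap_natCast_neBot (p : ℕ) [Fact p.Prime] (z : ℤ_[p]) :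
    Filter.NeBot ((nhds z).comap (fun n : ℕ => (n : ℤ_[p]))) := by
  rw [Filter.comap_neBot_iff]
  intro s hs
  rcases Metric.mem_nhds_iff.mp hs with ⟨ε, hε, hball⟩
  rcases PadicInt.denseRange_natCast.exists_dist_lt z hε with ⟨n, hn⟩
  exact ⟨n, hball (by rwa [Metric.mem_ball, dist_comm])⟩

lemma padicGamma_tendsto (p : ℕ) [Fact p.Prime] (hodd : Odd p) (z : ℤ_[p]) :
    ∃ L : ℤ_[p], Filter.Tendsto (padicGammaNat p)
      ((nhds z).comap (fun n : ℕ => (n : ℤ_[p]))) (nhds L) ∧ padicGamma p z = L := by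
  have hp := Fact.out (p := p.Prime)
  set G := (nhds z).comap (fun n : ℕ => (n : ℤ_[p])) with hG
  haveI : G.NeBot := comap_natCast_neBot p z
  have hcauchy : Cauchy (G.map (padicGammaNat p)) := by
    rw [Metric.cauchy_iff]
    refine ⟨Filter.map_neBot, fun ε hε => ?_⟩
    rcases PadicInt.exists_pow_neg_lt p hε with ⟨k, hk⟩
    set K := k + 1 with hK
    have hKk : (p : ℝ) ^ (-(K : ℤ)) ≤ (p : ℝ) ^ (-(k : ℤ)) := by
      apply zpow_le_zpow_right₀ (by exact_mod_cast hp.one_lt.le) (by omega)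
    set r : ℝ := (p : ℝ) ^ (-(K : ℤ)) with hr
    have hrpos : 0 < r := zpow_pos (by exact_mod_cast hp.pos) _
    set S : Set ℕ := (fun n : ℕ => (n : ℤ_[p])) ⁻¹' Metric.closedBall z r with hS
    refine ⟨padicGammaNat p '' S, ?_, ?_⟩
    · rw [Filter.mem_map]
      apply Filter.mem_of_superset (Filter.preimage_mem_comap (Metric.closedBall_mem_nhds z hrpos))
      exact fun x hx => Set.subset_preimage_image _ _ hx
    · rintro x ⟨m, hm, rfl⟩ y ⟨n, hn, rfl⟩
      have hmz : ‖(m : ℤ_[p]) - z‖ ≤ r := by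
        simpa [hS, dist_eq_norm] using hm
      have hnz : ‖(n : ℤ_[p]) - z‖ ≤ r := by
        simpa [hS, dist_eq_norm] using hn
      have hmn : ‖(m : ℤ_[p]) - (n : ℤ_[p])‖ ≤ r := by
        have : (m : ℤ_[p]) - n = ((m : ℤ_[p]) - z) + (z - n) := by ring
        rw [this]
        refine le_trans (PadicInt.nonarchimedean _ _) (max_le hmz ?_)
        rwa [← norm_neg, neg_sub]
      have hmod := natCast_close_modEq p (k := K) hmn
      have := padicGammaNat_norm_le p K hodd (by omega) hmod
      rw [dist_eq_norm]
      exact lt_of_le_of_lt (le_trans this hKk) hk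
  rcases CompleteSpace.complete hcauchy with ⟨L, hL⟩
  have hT : Filter.Tendsto (padicGammaNat p) G (nhds L) := hL
  exact ⟨L, hT, hT.limUnder_eq⟩

lemma prod_Ico_one_factorial : ∀ t : ℕ, (∏ j ∈ Finset.Ico 1 (t + 1), j) = Nat.factorial t := by
  intro t
  induction t with
  | zero => simp
  | succ t ih =>
    rw [Finset.prod_Ico_succ_top (by omega), ih, Nat.factorial_succ, mul_comm]

lemma padicGammaNat_of_le (p : ℕ) [Fact p.Prime] {n : ℕ} (h1 : 1 ≤ n) (h2 : n ≤ p) :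
    padicGammaNat p n = (-1) ^ n * ((Nat.factorial (n - 1) : ℕ) : ℤ_[p]) := by
  unfold padicGammaNat
  congr 1
  have hfilter : (Finset.Ioo 0 n).filter (fun j => ¬ p ∣ j) = Finset.Ioo 0 n := by
    apply Finset.filter_true_of_mem
    intro j hj
    simp only [Finset.mem_Ioo] at hj
    intro hdvd
    have := Nat.le_of_dvd hj.1 hdvd
    omega
  have hI : Finset.Ico 1 n = Finset.Ioo 0 n := Finset.Ico_succ_left_eq_Ioo 0 n
  rw [hfilter, ← hI]
  have hn : n = (n - 1) + 1 := by omega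
  rw [← Nat.cast_prod]
  congr 1
  rw [hn]
  exact prod_Ico_one_factorial (n - 1)

/-- For `d ∣ p - 1` and `1 ≤ a ≤ d - 1`, one has
`Γ_p(a/d) · ((p-1)a/d)! ≡ 1 (mod p)` in `ℤ_p`. -/
theorem padicGamma_mul_factorial_cong_one (p : ℕ) [Fact p.Prime] (hp : Odd p)
    (d a : ℕ) (hd : 0 < d) (hdvd : d ∣ p - 1) (ha1 : 1 ≤ a) (ha2 : a ≤ d - 1)
    (z : ℤ_[p]) (hz : (d : ℤ_[p]) * z = (a : ℤ_[p])) :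
    padicGamma p z * (Nat.factorial ((p - 1) * a / d) : ℤ_[p]) - 1 ∈
      Ideal.span {(p : ℤ_[p])} := by
  have hpp := Fact.out (p := p.Prime)
  have hp3 : 3 ≤ p := by rcases hp with ⟨t, ht⟩; have := hpp.two_le; omega
  rcases hdvd with ⟨e, he⟩
  have he1 : 1 ≤ e := by
    rcases Nat.eq_zero_or_pos e with rfl | h; · omega
    · exact h
  have hd2 : 2 ≤ d := by omega
  set m : ℕ := (p - 1) * a / d with hm
  have hme : m = e * a := by
    rw [hm, he, mul_assoc, Nat.mul_div_cancel_left _ hd]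
  clear_value m
  have hm1 : 1 ≤ m := by
    rw [hme]
    exact Nat.one_le_iff_ne_zero.mpr (Nat.mul_ne_zero (by omega) (by omega))
  have hm2 : m ≤ p - 2 := by
    have h1 : m ≤ e * (d - 1) := by rw [hme]; exact Nat.mul_le_mul_left e ha2
    have h2 : e * (d - 1) = (p - 1) - e := by
      have h3 : e * d = p - 1 := by rw [he]; ring
      have h4 : e * (d - 1) = e * d - e := by
        rcases d with _ | d'
        · omega
        · rw [Nat.mul_sub, mul_one]
      omega
    omega
  set n₀ : ℕ := p - m with hn₀
  have hn₀1 : 2 ≤ n₀ := by omega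
  have hn₀2 : n₀ ≤ p - 1 := by omega
  have hn₀m : n₀ + m = p := by omega
  -- z + m ∈ span p
  have hzm : z + (m : ℤ_[p]) ∈ Ideal.span {(p : ℤ_[p])} := by
    rw [Ideal.mem_span_singleton]
    have hdm : (d : ℤ_[p]) * (z + (m : ℤ_[p])) = (p : ℤ_[p]) * (a : ℤ_[p]) := by
      rw [mul_add, hz]
      have hdmm : (d : ℤ_[p]) * (m : ℤ_[p]) = (((p - 1) * a : ℕ) : ℤ_[p]) := by
        rw [← Nat.cast_mul]
        congr 1
        rw [hme, he]
        ring
      rw [hdmm]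
      have : ((p - 1) * a : ℕ) = p * a - a := by
        have := Nat.succ_le_of_lt hpp.pos
        rw [Nat.sub_mul, one_mul]
      rw [this, Nat.cast_sub (by nlinarith [hpp.pos] : a ≤ p * a)]
      push_cast
      ring
    have hdu : IsUnit (d : ℤ_[p]) := by
      rw [PadicInt.isUnit_iff]
      have : ¬ (p : ℤ) ∣ (d : ℤ) := by
        rw [Int.natCast_dvd_natCast]
        intro hpd
        have h5 := Nat.le_of_dvd hd hpd
        have h6 : d ≤ d * e := Nat.le_mul_of_pos_right d he1
        omega
      have hlt := (PadicInt.norm_int_lt_one_iff_dvd (d : ℤ)).not.mpr this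
      have hle : ‖((d : ℤ) : ℤ_[p])‖ ≤ 1 := PadicInt.norm_le_one _
      push_cast at hlt hle
      rcases lt_or_eq_of_le hle with h | h
      · exact absurd h hlt
      · exact h
    rcases hdu with ⟨u, hu⟩
    refine ⟨(↑u⁻¹ : ℤ_[p]) * a, ?_⟩
    have h1 : (↑u⁻¹ : ℤ_[p]) * ((u : ℤ_[p]) * (z + (m : ℤ_[p]))) = z + (m : ℤ_[p]) := by
      rw [← mul_assoc]
      simp
    rw [← h1, hu, hdm]
    ring
  rcases padicGamma_tendsto p hp z with ⟨L, hT, hlim⟩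
  haveI : ((nhds z).comap (fun n : ℕ => (n : ℤ_[p]))).NeBot := comap_natCast_neBot p z
  set c : ℤ_[p] := padicGammaNat p n₀ with hc
  set r : ℝ := (p : ℝ) ^ (-(1 : ℕ) : ℤ) with hr
  have hrpos : 0 < r := zpow_pos (by exact_mod_cast hpp.pos) _
  have hzn₀ : ‖z - (n₀ : ℤ_[p])‖ ≤ r := by
    rw [hr, PadicInt.norm_le_pow_iff_mem_span_pow, pow_one]
    have hcastn₀ : (n₀ : ℤ_[p]) + (m : ℤ_[p]) = ((p : ℕ) : ℤ_[p]) := by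
      rw [← Nat.cast_add, hn₀m]
    have heq : z - (n₀ : ℤ_[p]) = (z + (m : ℤ_[p])) - ((p : ℕ) : ℤ_[p]) := by
      rw [← hcastn₀]
      ring
    rw [heq]
    exact Ideal.sub_mem _ hzm (Ideal.mem_span_singleton_self _)
  have hev : ∀ᶠ x in ((nhds z).comap (fun n : ℕ => (n : ℤ_[p]))),
      padicGammaNat p x ∈ Metric.closedBall c r := by
    have hmem : (fun n : ℕ => (n : ℤ_[p])) ⁻¹' Metric.closedBall z r ∈
        ((nhds z).comap (fun n : ℕ => (n : ℤ_[p]))) :=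
      Filter.preimage_mem_comap (Metric.closedBall_mem_nhds z hrpos)
    filter_upwards [hmem] with n hn
    have h1 : ‖(n : ℤ_[p]) - z‖ ≤ r := by
      simpa [dist_eq_norm] using hn
    have h2 : ‖(n : ℤ_[p]) - (n₀ : ℤ_[p])‖ ≤ r := by
      have heq2 : (n : ℤ_[p]) - (n₀ : ℤ_[p]) = ((n : ℤ_[p]) - z) + (z - (n₀ : ℤ_[p])) := by ring
      rw [heq2]
      exact le_trans (PadicInt.nonarchimedean _ _) (max_le h1 hzn₀)
    have h3 : n ≡ n₀ [MOD p ^ 1] := natCast_close_modEq p (k := 1) (by rw [← hr]; exact h2)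
    have h4 := padicGammaNat_norm_le p 1 hp le_rfl h3
    simpa [Metric.mem_closedBall, dist_eq_norm, hr, hc] using h4
  have hLc : L ∈ Metric.closedBall c r := Metric.isClosed_closedBall.mem_of_tendsto hT hev
  have hLc' : L - c ∈ Ideal.span {(p : ℤ_[p])} := by
    have h5 : ‖L - c‖ ≤ r := by simpa [dist_eq_norm] using hLc
    rw [hr, PadicInt.norm_le_pow_iff_mem_span_pow, pow_one] at h5
    exact h5
  rw [hlim, ← PadicInt.maximalIdeal_eq_span_p, ← PadicInt.ker_toZMod, RingHom.mem_ker,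
    map_sub, map_mul, map_one, map_natCast]
  have htoL : PadicInt.toZMod L = PadicInt.toZMod c := by
    rw [← PadicInt.maximalIdeal_eq_span_p, ← PadicInt.ker_toZMod, RingHom.mem_ker, map_sub,
      sub_eq_zero] at hLc'
    exact hLc'
  have hcval : c = (-1) ^ n₀ * ((Nat.factorial (n₀ - 1) : ℕ) : ℤ_[p]) :=
    padicGammaNat_of_le p (by omega) (by omega)
  have htoc : PadicInt.toZMod c = (-1) ^ n₀ * ((Nat.factorial (n₀ - 1) : ℕ) : ZMod p) := by
    rw [hcval, map_mul, map_pow, map_neg, map_one, map_natCast]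
  rw [htoL, htoc]
  have hsub : n₀ - 1 = p - 1 - m := by omega
  rw [hsub]
  set F : ZMod p := ((Nat.factorial (p - 1 - m) : ℕ) : ZMod p) with hF
  set M : ZMod p := ((Nat.factorial m : ℕ) : ZMod p) with hM
  have hfac0 : Nat.factorial (p - 1 - m) * Nat.descFactorial (p - 1) m
      = Nat.factorial (p - 1) := Nat.factorial_mul_descFactorial (by omega)
  have hfacZ : F * ((-1) ^ m * M) = -1 := by
    have h6 := congrArg (fun t : ℕ => (t : ZMod p)) hfac0
    simp only [Nat.cast_mul] at h6
    rw [ZMod.cast_descFactorial (by omega : m ≤ p), ZMod.wilsons_lemma] at h6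
    rw [hF, hM]
    exact h6
  have hx : ((-1 : ZMod p)) ^ n₀ * (-1) ^ m = -1 := by
    rw [← pow_add, hn₀m]
    exact Odd.neg_one_pow hp
  have hy : ((-1 : ZMod p)) ^ m * (-1) ^ m = 1 := by
    rw [← pow_add]
    exact Even.neg_one_pow ⟨m, rfl⟩
  linear_combination ((-1 : ZMod p) ^ n₀ * (-1) ^ m) * hfacZ
    + (-((-1 : ZMod p) ^ n₀ * F * M)) * hy + (-1 : ZMod p) * hx
end

section
/- Let A be an invertible n × n integer matrix such that the vector q = J A^{−T} (where J = (1,…,1)) has all entries strictly positive and satisfies qJ^T = 1 (equivalently J A^{−T} J^T = 1). Let p be a prime. Suppose c ∈ ℕ^n satisfies c_1 + ⋯ + c_n = p − 1 and cA = (p−1)m for some m ∈ ℤ^n with every entry m_j ≥ 1. Then c = (p−1) J A^{−1}. -/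
open Matrix

/-- If the weight vector `q = J A^{-T}` has positive entries summing to `1`
(Calabi–Yau condition) and `c ∈ ℕ^n` satisfies `|c| = p - 1` with
`cA = (p-1)m`, `m_j ≥ 1`, then `c = (p-1) J A^{-1}`. -/
theorem unique_leading_multiindex (n p : ℕ) (hp : p.Prime)
    (A : Matrix (Fin n) (Fin n) ℤ)
    (B : Matrix (Fin n) (Fin n) ℚ) (hB : B = A.map (Int.cast : ℤ → ℚ))
    (hdet : B.det ≠ 0)
    (hqpos : ∀ j, 0 < Matrix.vecMul (fun _ => (1 : ℚ)) (Bᵀ)⁻¹ j)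
    (hqsum : ∑ j, Matrix.vecMul (fun _ => (1 : ℚ)) (Bᵀ)⁻¹ j = 1)
    (c : Fin n → ℕ) (hc : ∑ i, c i = p - 1)
    (m : Fin n → ℤ) (hm : ∀ j, 1 ≤ m j)
    (hcA : ∀ j, Matrix.vecMul (fun i => (c i : ℚ)) B j = ((p - 1 : ℕ) : ℚ) * m j) :
    ∀ i, (c i : ℚ) = ((p - 1 : ℕ) : ℚ) * Matrix.vecMul (fun _ => (1 : ℚ)) B⁻¹ i := by
  set q : Fin n → ℚ := Matrix.vecMul (fun _ => (1 : ℚ)) (Bᵀ)⁻¹ with hq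
  have hdetT : (Bᵀ).det ≠ 0 := by rwa [Matrix.det_transpose]
  have hqB : Matrix.vecMul q Bᵀ = fun _ => (1 : ℚ) := by
    rw [hq, Matrix.vecMul_vecMul,
      Matrix.nonsing_inv_mul _ (isUnit_iff_ne_zero.mpr hdetT), Matrix.vecMul_one]
  have hrow : ∀ i, ∑ j, B i j * q j = 1 := by
    intro i
    have := congrFun hqB i
    simpa [Matrix.vecMul, dotProduct, Matrix.transpose_apply, mul_comm] using this
  have hp1 : ((p - 1 : ℕ) : ℚ) ≠ 0 :=
    Nat.cast_ne_zero.mpr (Nat.sub_ne_zero_of_lt hp.one_lt)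
  have hsum : ∑ j, q j * (((p - 1 : ℕ) : ℚ) * m j) = ((p - 1 : ℕ) : ℚ) := by
    calc ∑ j, q j * (((p - 1 : ℕ) : ℚ) * m j)
        = ∑ j, q j * Matrix.vecMul (fun i => (c i : ℚ)) B j := by
          simp only [hcA]
      _ = ∑ i, (c i : ℚ) * ∑ j, B i j * q j := by
          simp only [Matrix.vecMul, dotProduct, Finset.mul_sum, Finset.sum_mul]
          rw [Finset.sum_comm]
          apply Finset.sum_congr rfl; intro i _
          apply Finset.sum_congr rfl; intro j _
          ring
      _ = ∑ i, (c i : ℚ) := by simp [hrow]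
      _ = ((p - 1 : ℕ) : ℚ) := by rw [← Nat.cast_sum, hc]
  have hsm : ∑ j, q j * (m j : ℚ) = 1 := by
    have h : ((p - 1 : ℕ) : ℚ) * ∑ j, q j * (m j : ℚ) = ((p - 1 : ℕ) : ℚ) := by
      have h2 : ((p - 1 : ℕ) : ℚ) * ∑ j, q j * (m j : ℚ)
          = ∑ j, q j * (((p - 1 : ℕ) : ℚ) * m j) := by
        rw [Finset.mul_sum]
        apply Finset.sum_congr rfl; intro j _; ring
      exact h2.trans hsum
    exact mul_left_cancel₀ hp1 (h.trans (mul_one _).symm)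
  have h0 : ∑ j, q j * ((m j : ℚ) - 1) = 0 := by
    have : ∑ j, q j * ((m j : ℚ) - 1) = (∑ j, q j * (m j : ℚ)) - ∑ j, q j := by
      rw [← Finset.sum_sub_distrib]
      apply Finset.sum_congr rfl; intro j _; ring
    rw [this, hsm, hqsum, sub_self]
  have hm1 : ∀ j, (m j : ℚ) = 1 := by
    intro j
    have hnn : ∀ k ∈ Finset.univ, 0 ≤ q k * ((m k : ℚ) - 1) := by
      intro k _
      have : (1 : ℚ) ≤ (m k : ℚ) := by exact_mod_cast hm k
      exact mul_nonneg (hqpos k).le (by linarith)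
    have := (Finset.sum_eq_zero_iff_of_nonneg hnn).mp h0 j (Finset.mem_univ j)
    have hqj := hqpos j
    have : (m j : ℚ) - 1 = 0 := by
      rcases mul_eq_zero.mp this with h | h
      · exact absurd h (ne_of_gt hqj)
      · exact h
    linarith
  have hcB : Matrix.vecMul (fun i => (c i : ℚ)) B = fun _ => ((p - 1 : ℕ) : ℚ) := by
    funext j; rw [hcA j, hm1 j, mul_one]
  intro i
  have key : Matrix.vecMul (Matrix.vecMul (fun i => (c i : ℚ)) B) B⁻¹
      = Matrix.vecMul (fun _ => ((p - 1 : ℕ) : ℚ)) B⁻¹ := by rw [hcB]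
  rw [Matrix.vecMul_vecMul, Matrix.mul_nonsing_inv _ (isUnit_iff_ne_zero.mpr hdet),
    Matrix.vecMul_one] at key
  have := congrFun key i
  rw [this]
  simp [Matrix.vecMul, dotProduct, Finset.mul_sum]
end
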